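/- The pair (su(4), ℝ ⊕ su(2) ⊕ su(2)) is almost multiplicity free; concretely: let x = e₁₂ + e₂₃ + e₃₄ ∈ su(4) (viewed inside gl₄(ℂ), with e_{ij} the standard real skew-symmetric basis elements e_{ij} = E_{ij} - E_{ji}). Let k = ℝ·iI' ⊕ su(2) ⊕ su(2) embedded block-diagonally with 2+2 blocks and p its orthogonal complement with respect to the trace form. Then the projections pr_p(x) = e₂₃, pr_p(ix²), pr_p(x³) of the elements x, ix², x³ of the centralizer of x are linearly independent in p. -/

import Mathlib

/-- `e4 i j = E_{ij} - E_{ji}` as a complex 4×4 matrix (0-based indices). -/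
def e4 (i j : Fin 4) : Matrix (Fin 4) (Fin 4) ℂ :=
  Matrix.single i j 1 - Matrix.single j i 1

/-- The projection onto the orthogonal complement `p` of `k = s(u(2) ⊕ u(2))` inside
`su(4)`: it kills the two diagonal 2×2 blocks and keeps the off-diagonal blocks. -/
def prp4 (X : Matrix (Fin 4) (Fin 4) ℂ) : Matrix (Fin 4) (Fin 4) ℂ :=
  Matrix.of fun i j => if ((i : ℕ) < 2 ↔ (j : ℕ) < 2) then 0 else X i j

/-- for `x = e₁₂ + e₂₃ + e₃₄ ∈ su(4)` (1-based indices in the paper,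
0-based here), the projections onto `p = k^⊥` of the elements `x`, `i x²`, `x³` of the
centralizer of `x` are linearly independent over `ℝ`; hence the pair
`(su(4), ℝ ⊕ su(2) ⊕ su(2))` is almost multiplicity free. -/
theorem su4_almost_multiplicity_free :
    LinearIndependent ℝ
      ![prp4 (e4 0 1 + e4 1 2 + e4 2 3),
        prp4 ((Complex.I : ℂ) •
          ((e4 0 1 + e4 1 2 + e4 2 3) * (e4 0 1 + e4 1 2 + e4 2 3))),
        prp4 ((e4 0 1 + e4 1 2 + e4 2 3) * (e4 0 1 + e4 1 2 + e4 2 3) *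
          (e4 0 1 + e4 1 2 + e4 2 3))] := by
  rw [Fintype.linearIndependent_iff]
  intro g h
  have h03 := congrFun (congrFun h 0) 3
  have h02 := congrFun (congrFun h 0) 2
  have h12 := congrFun (congrFun h 1) 2
  simp [Fin.sum_univ_three, e4, prp4, Matrix.mul_apply, Fin.sum_univ_four,
    Matrix.single, Matrix.add_apply, Matrix.sub_apply, Matrix.smul_apply,
    Matrix.of_apply, Complex.ext_iff] at h03 h02 h12
  have hg2 : g 2 = 0 := h03
  intro i
  fin_cases i
  · simpa [hg2] using h12
  · exact h02
  · exact hg2
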